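/- Let (A, ∗) be an anti-Zinbiel algebra and ω a symmetric bilinear form on A that is invariant, i.e., ω(x∗y, z) = -ω(x, y⋆z) where y⋆z = y∗z + z∗y. Then ω is a commutative Connes cocycle on the associated commutative associative algebra (A, ⋆), i.e., ω(x⋆y, z) + ω(y⋆z, x) + ω(z⋆x, y) = 0 for all x, y, z ∈ A. -/
import Mathlib

/-- An anti-Zinbiel algebra structure on a vector space `A`. -/
def IsAntiZinbiel {k A : Type*} [Field k] [AddCommGroup A] [Module k A]
    (s : A →ₗ[k] A →ₗ[k] A) : Prop :=
  (∀ x y z, s x (s y z) = - s (s x y + s y x) z) ∧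
  (∀ x y z, s x (s y z) = - s (s y z + s z y) x) ∧
  (∀ x y z, s x (s y z) = s z (s y x)) ∧
  (∀ x y z, s z (s x y) = s x (s z y))

/-- a symmetric invariant bilinear form on an anti-Zinbiel algebra is a
commutative Connes cocycle on the associated commutative associative algebra `(A, ⋆)`. -/
theorem invariant_form_connes_cocycle {k A : Type*} [Field k] [AddCommGroup A] [Module k A]
    (s : A →ₗ[k] A →ₗ[k] A) (h : IsAntiZinbiel s)
    (ω : A →ₗ[k] A →ₗ[k] k)
    (hsym : ∀ x y : A, ω x y = ω y x)
    (hinv : ∀ x y z : A, ω (s x y) z = - ω x (s y z + s z y)) :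
    ∀ x y z : A,
      ω (s x y + s y x) z + ω (s y z + s z y) x + ω (s z x + s x z) y = 0 := by
  intro x y z
  have h1 := hinv x y z
  have h2 := hinv y x z
  have h3 := hsym x (s y z + s z y)
  have h4 := hsym y (s x z + s z x)
  simp only [map_add, LinearMap.add_apply] at *
  linear_combination h1 + h2 - h3 - h4
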